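/- There exists a connected bipartite graph G on n = 19 vertices such that d(x) + d(y) ≥ n/4 + 1 for every pair of nonadjacent vertices x, y, but pc(G) = 3. (Namely, take three copies of K_{3,3}, a new vertex v0, pick one vertex v_i in each copy, and join v0 to each v_i by an edge.) -/

import Mathlib

open SimpleGraph

/-- An edge-coloring `c` with `k` colors is a *proper connection coloring* of `G`
if every pair of vertices is joined by a path whose consecutive edges have distinct colors. -/
def ProperConnColoring {V : Type*} (G : SimpleGraph V) {k : ℕ} (c : Sym2 V → Fin k) : Prop :=
  ∀ u v : V, ∃ p : G.Walk u v, p.IsPath ∧ (p.edges.map c).Chain' (· ≠ ·)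

/-- The proper connection number of `G`. -/
noncomputable def pc {V : Type*} (G : SimpleGraph V) : ℕ :=
  sInf {k | ∃ c : Sym2 V → Fin k, ProperConnColoring G c}

def adjB (x y : Fin 19) : Bool :=
  decide (x ≠ y) &&
  ((decide (x = 0) && (decide (y = 1) || decide (y = 7) || decide (y = 13))) ||
   (decide (y = 0) && (decide (x = 1) || decide (x = 7) || decide (x = 13))) ||
   (decide (x ≠ 0) && decide (y ≠ 0) && decide ((x.val-1)/6 = (y.val-1)/6) &&
     (decide ((x.val-1)%6 < 3) != decide ((y.val-1)%6 < 3))))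

def G19 : SimpleGraph (Fin 19) :=
  ⟨fun x y => adjB x y = true, ⟨fun x y h => (by decide : ∀ x y : Fin 19, adjB x y = true → adjB y x = true) x y h⟩, ⟨fun x h => (by decide : ∀ x : Fin 19, ¬ adjB x x = true) x h⟩⟩

instance : DecidableRel G19.Adj := fun x y => inferInstanceAs (Decidable (adjB x y = true))

def colF (x y : Fin 19) : Fin 3 :=
  if x = 0 then ⟨(y.val-1)/6 % 3, by omega⟩
  else if y = 0 then ⟨(x.val-1)/6 % 3, by omega⟩
  else ⟨(((x.val-1)%6)%3 + ((y.val-1)%6)%3) % 3, by omega⟩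

def fv (n : ℕ) : Fin 19 := ⟨n % 19, Nat.mod_lt _ (by norm_num)⟩

def copyOf (z : Fin 19) : ℕ := (z.val - 1) / 6
def idxOf (z : Fin 19) : ℕ := (z.val - 1) % 6

def vA (t i : ℕ) : Fin 19 := fv (1 + 6*t + i)
def vB (t j : ℕ) : Fin 19 := fv (4 + 6*t + j)

def route0 (v : Fin 19) : List (Fin 19) :=
  let t := copyOf v
  if idxOf v < 3 then
    if idxOf v = 0 then [v]
    else [vA t 0, vB t ((t+1)%3), v]
  else
    if idxOf v % 3 ≠ t % 3 then [vA t 0, v]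
    else [vA t 0, vB t ((t+1)%3), vA t 1, v]

def routeSame (u v : Fin 19) : List (Fin 19) :=
  let t := copyOf u
  if idxOf u < 3 then
    if idxOf v < 3 then [vB t 0, v] else [v]
  else
    if idxOf v < 3 then [v] else [vA t 0, v]

def route (u v : Fin 19) : List (Fin 19) :=
  if u = v then []
  else if u = 0 then route0 v
  else if v = 0 then ((0 :: route0 u).reverse).tail
  else if copyOf u = copyOf v then routeSame u v
  else ((0 :: route0 u).reverse).tail ++ route0 v

def chainB {α : Type*} (f : α → α → Bool) : α → List α → Bool
  | _, [] => true
  | a, b :: l => f a b && chainB f b l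

def nodupB {α : Type*} [DecidableEq α] : List α → Bool
  | [] => true
  | a :: l => l.all (fun b => decide (a ≠ b)) && nodupB l

def propB {α : Type*} [DecidableEq α] : List α → Bool
  | [] => true
  | [_] => true
  | a :: b :: l => (decide (a ≠ b)) && propB (b :: l)

lemma chainB_chain {α : Type*} {f : α → α → Bool} {R : α → α → Prop}
    (hf : ∀ a b, f a b = true → R a b) :
    ∀ (a : α) (l : List α), chainB f a l = true → List.Chain R a l
  | _, [], _ => List.Chain.nil
  | a, b :: l, h => by
      simp only [chainB, Bool.and_eq_true] at h
      exact List.Chain.cons (hf _ _ h.1) (chainB_chain hf b l h.2)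

lemma nodupB_nodup {α : Type*} [DecidableEq α] :
    ∀ (l : List α), nodupB l = true → l.Nodup
  | [], _ => List.nodup_nil
  | a :: l, h => by
      simp only [nodupB, Bool.and_eq_true, List.all_eq_true] at h
      refine List.nodup_cons.2 ⟨fun hm => ?_, nodupB_nodup l h.2⟩
      have := h.1 a hm
      simp at this
  termination_by l => l.length

lemma propB_chain' {α : Type*} [DecidableEq α] :
    ∀ (l : List α), propB l = true → l.Chain' (· ≠ ·)
  | [], _ => List.isChain_nil
  | [_], _ => List.isChain_singleton _
  | a :: b :: l, h => by
      simp only [propB, Bool.and_eq_true, decide_eq_true_eq] at h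
      exact List.isChain_cons_cons.2 ⟨h.1, propB_chain' (b :: l) h.2⟩
  termination_by l => l.length

def CheckB (u v : Fin 19) : Bool :=
  chainB adjB u (route u v) &&
  decide ((u :: route u v).getLast (List.cons_ne_nil _ _) = v) &&
  nodupB (u :: route u v) &&
  propB (List.zipWith colF (u :: route u v) (route u v))

set_option maxRecDepth 10000 in
lemma allCheck : ∀ u v : Fin 19, CheckB u v = true := by decide

def toWalk {V : Type*} (G : SimpleGraph V) :
    ∀ (u : V) (l : List V), List.Chain G.Adj u l →
      G.Walk u ((u :: l).getLast (List.cons_ne_nil _ _))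
  | _, [], _ => Walk.nil
  | u, x :: xs, h =>
      Walk.cons (List.chain_cons.mp h).1 (toWalk G x xs (List.chain_cons.mp h).2)

lemma toWalk_support {V : Type*} (G : SimpleGraph V) :
    ∀ (u : V) (l : List V) (h : List.Chain G.Adj u l),
      (toWalk G u l h).support = u :: l
  | _, [], _ => rfl
  | u, x :: xs, h => by
      simp [toWalk, toWalk_support G x xs]; exact toWalk_support G x xs _

lemma toWalk_edges {V : Type*} (G : SimpleGraph V) :
    ∀ (u : V) (l : List V) (h : List.Chain G.Adj u l),
      (toWalk G u l h).edges = List.zipWith (fun a b => s(a, b)) (u :: l) l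
  | _, [], _ => rfl
  | u, x :: xs, h => by
      simp [toWalk, toWalk_edges G x xs]; exact toWalk_edges G x xs _

lemma check_to_path {V : Type*} (G : SimpleGraph V) {k : ℕ} (f : V → V → Fin k)
    (hf : ∀ a b, f a b = f b a) (u v : V) (l : List V)
    (h1 : List.Chain G.Adj u l) (h2 : (u :: l).getLast (List.cons_ne_nil _ _) = v)
    (h3 : (u :: l).Nodup)
    (h4 : (List.zipWith f (u :: l) l).Chain' (· ≠ ·)) :
    ∃ p : G.Walk u v, p.IsPath ∧ (p.edges.map (Sym2.lift ⟨f, hf⟩)).Chain' (· ≠ ·) := by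
  subst h2
  refine ⟨toWalk G u l h1, ?_, ?_⟩
  · rw [Walk.isPath_def, toWalk_support]; exact h3
  · rw [toWalk_edges]
    have : (List.zipWith (fun a b => s(a, b)) (u :: l) l).map (Sym2.lift ⟨f, hf⟩)
        = List.zipWith f (u :: l) l := by
      rw [List.map_zipWith]
      simp only [Sym2.lift_mk]
    rw [this]; exact h4

lemma colF_symm : ∀ a b : Fin 19, colF a b = colF b a := by decide

def c3 : Sym2 (Fin 19) → Fin 3 := Sym2.lift ⟨colF, colF_symm⟩

lemma checkB_split (u v : Fin 19) :
    List.Chain G19.Adj u (route u v) ∧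
    (u :: route u v).getLast (List.cons_ne_nil _ _) = v ∧
    (u :: route u v).Nodup ∧
    (List.zipWith colF (u :: route u v) (route u v)).Chain' (· ≠ ·) := by
  have h := allCheck u v
  simp only [CheckB, Bool.and_eq_true, decide_eq_true_eq] at h
  exact ⟨chainB_chain (fun a b hb => hb) _ _ h.1.1.1, h.1.1.2,
    nodupB_nodup _ h.1.2, propB_chain' _ h.2⟩

lemma properConn3 : ProperConnColoring G19 c3 := by
  intro u v
  obtain ⟨h1, h2, h3, h4⟩ := checkB_split u v
  exact check_to_path G19 colF colF_symm u v (route u v) h1 h2 h3 h4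

lemma G19_connected : G19.Connected := by
  rw [connected_iff]
  refine ⟨fun u v => ?_, ⟨0⟩⟩
  obtain ⟨p, _, _⟩ := properConn3 u v
  exact ⟨p⟩

lemma G19_colorable : G19.Colorable 2 := by
  refine ⟨SimpleGraph.Coloring.mk
    (fun x => if x ≠ 0 ∧ idxOf x < 3 then 1 else 0) ?_⟩
  intro u v h
  revert h
  exact (by decide : ∀ u v : Fin 19, G19.Adj u v →
    (if u ≠ 0 ∧ idxOf u < 3 then (1 : Fin 2) else 0) ≠
    (if v ≠ 0 ∧ idxOf v < 3 then 1 else 0)) u v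

lemma G19_degree : ∀ x : Fin 19, 3 ≤ G19.degree x := by decide

lemma G19_ncard (x : Fin 19) : (G19.neighborSet x).ncard = G19.degree x := by
  rw [Set.ncard_eq_toFinset_card', ← SimpleGraph.neighborFinset_def]
  rfl

lemma adj_copy : ∀ x y : Fin 19, G19.Adj x y → x ≠ 0 → y ≠ 0 → copyOf x = copyOf y := by
  decide

lemma lemA : ∀ {x y : Fin 19} (r : G19.Walk x y),
    (0 : Fin 19) ∉ r.support → copyOf x = copyOf y := by
  intro x y r
  induction r with
  | nil => intro _; rfl
  | @cons a b y h q ih =>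
      intro hs
      rw [Walk.support_cons, List.mem_cons] at hs
      push_neg at hs
      have h0q : (0 : Fin 19) ∉ q.support := hs.2
      have hb : b ≠ 0 := fun e => h0q (e ▸ q.start_mem_support)
      exact (adj_copy a b h (Ne.symm hs.1) hb).trans (ih h0q)

lemma adj_zero_copy : ∀ (i : Fin 3) (x : Fin 19),
    G19.Adj 0 x → copyOf x = i.val → x = fv (1 + 6 * i.val) := by decide

lemma fv_facts : ∀ i : Fin 3, fv (1 + 6 * i.val) ≠ 0 ∧ copyOf (fv (1 + 6 * i.val)) = i.val := by
  decide

lemma fv_copy_ne : ∀ i j : Fin 3, i ≠ j →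
    copyOf (fv (1 + 6 * i.val)) ≠ copyOf (fv (1 + 6 * j.val)) := by decide

lemma cross {k : ℕ} (c : Sym2 (Fin 19) → Fin k) (hpc : ProperConnColoring G19 c)
    (i j : Fin 3) (hij : i ≠ j) :
    c s(0, fv (1 + 6 * i.val)) ≠ c s(0, fv (1 + 6 * j.val)) := by
  set u := fv (1 + 6 * i.val) with hu
  set w := fv (1 + 6 * j.val) with hw
  obtain ⟨hu0, hucopy⟩ := fv_facts i
  obtain ⟨hw0, hwcopy⟩ := fv_facts j
  obtain ⟨p, hp, hch⟩ := hpc u w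
  have h0 : (0 : Fin 19) ∈ p.support := by
    by_contra h
    exact fv_copy_ne i j hij (lemA p h)
  have hq1 : (p.takeUntil 0 h0).IsPath := hp.takeUntil h0
  have hq2 : (p.dropUntil 0 h0).IsPath := hp.dropUntil h0
  obtain ⟨x, hax, r, hr⟩ := Walk.exists_eq_cons_of_ne (Ne.symm hu0) (p.takeUntil 0 h0).reverse
  obtain ⟨y, hay, r2, hr2⟩ := Walk.exists_eq_cons_of_ne hw0.symm (p.dropUntil 0 h0)
  -- 0 not in r.support
  have hrp : ((p.takeUntil 0 h0).reverse).IsPath := hq1.reverse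
  rw [hr] at hrp
  have hnd1 := hrp.support_nodup
  rw [Walk.support_cons] at hnd1
  have h0r : (0 : Fin 19) ∉ r.support := (List.nodup_cons.mp hnd1).1
  have hx0 : x ≠ 0 := fun e => h0r (e ▸ r.start_mem_support)
  have hxcopy : copyOf x = i.val := (lemA r h0r).trans hucopy
  have hxu : x = u := adj_zero_copy i x hax hxcopy
  -- 0 not in r2.support
  rw [hr2] at hq2
  have hnd2 := hq2.support_nodup
  rw [Walk.support_cons] at hnd2
  have h0r2 : (0 : Fin 19) ∉ r2.support := (List.nodup_cons.mp hnd2).1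
  have hycopy : copyOf y = j.val := (lemA r2 h0r2).trans hwcopy
  have hyw : y = w := adj_zero_copy j y hay hycopy
  -- edge decomposition
  have hedges : p.edges = ((p.takeUntil 0 h0).edges ++ (p.dropUntil 0 h0).edges) := by
    conv_lhs => rw [← Walk.take_spec p h0]
    rw [Walk.edges_append]
  have he1 : (p.takeUntil 0 h0).edges = r.edges.reverse ++ [s(0, x)] := by
    have : (p.takeUntil 0 h0) = ((p.takeUntil 0 h0).reverse).reverse := by
      rw [Walk.reverse_reverse]
    rw [this, hr, Walk.edges_reverse, Walk.edges_cons, List.reverse_cons]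
  have he2 : (p.dropUntil 0 h0).edges = s(0, y) :: r2.edges := by
    rw [hr2, Walk.edges_cons]
  rw [hedges, he1, he2] at hch
  intro hcc
  have hinfix : [c s(0, u), c s(0, w)] <:+:
      ((r.edges.reverse ++ [s(0, x)]) ++ (s(0, y) :: r2.edges)).map c := by
    refine ⟨r.edges.reverse.map c, r2.edges.map c, ?_⟩
    subst hxu hyw
    simp [List.map_append]
  have := (hch.infix hinfix)
  rw [List.isChain_pair] at this
  exact this hcc

lemma pc_G19 : pc G19 = 3 := by
  have h3 : 3 ∈ {k | ∃ c : Sym2 (Fin 19) → Fin k, ProperConnColoring G19 c} :=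
    ⟨c3, properConn3⟩
  refine le_antisymm (Nat.sInf_le h3) (le_csInf ⟨3, h3⟩ ?_)
  rintro k ⟨c, hc⟩
  by_contra hk
  push_neg at hk
  have hcard : Fintype.card (Fin k) < Fintype.card (Fin 3) := by
    simpa using Nat.lt_of_lt_of_le hk (by norm_num)
  obtain ⟨i, j, hij, hfij⟩ := Fintype.exists_ne_map_eq_of_card_lt
    (fun i : Fin 3 => c s(0, fv (1 + 6 * i.val))) hcard
  exact cross c hc i j hij hfij

/-- Sharpness of the bipartite degree sum bound: there is a connected bipartite graph
on `n = 19` vertices with `d(x) + d(y) ≥ n/4 + 1` for all nonadjacent `x ≠ y`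
but with proper connection number 3. -/
theorem bipartite_degreeSum_sharp :
    ∃ G : SimpleGraph (Fin 19), G.Connected ∧ G.Colorable 2 ∧
      (∀ x y : Fin 19, x ≠ y → ¬ G.Adj x y →
        (19 : ℝ) / 4 + 1 ≤ (G.neighborSet x).ncard + (G.neighborSet y).ncard) ∧
      pc G = 3 := by
  refine ⟨G19, G19_connected, G19_colorable, ?_, pc_G19⟩
  intro x y _ _
  have hx := G19_degree x
  have hy := G19_degree y
  rw [G19_ncard x, G19_ncard y]
  have : (6 : ℝ) ≤ (G19.degree x : ℝ) + (G19.degree y : ℝ) := by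
    have : 6 ≤ G19.degree x + G19.degree y := by omega
    exact_mod_cast this
  linarith
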